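/- The group M = G(A ⊆ B) is metabelian: its commutator subgroup is contained in its center. In particular M is nilpotent of class at most 2. -/

import Mathlib

namespace Metabelian

variable {B : Type*} [AddCommGroup B]

/-- The subgroup `A` of `B` is bounded by `n`, i.e. `n • a = 0` for all `a ∈ A`. -/
class BoundedSub (A : AddSubgroup B) (n : ℕ) : Prop where
  bound : ∀ a : A, n • (a : B) = 0

lemma val_smul_eq {n : ℕ} (a : B) (h : n • a = 0) (x : ℕ) : (x % n) • a = x • a := by
  conv_rhs => rw [← Nat.mod_add_div x n]
  rw [add_nsmul, mul_nsmul, h, smul_zero, add_zero]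

/-- Birkhoff's construction `G(A ⊆ B) = (A ⊕ B) ⋊_ψ D` with `D = ℤ/n` where `n` bounds `A`:
the underlying set is `A × B × ℤ/n` and the (multiplicatively written) group operation is
`(a,b,d)·(a',b',d') = (a+a', b + d·ι(a') + b', d+d')`. -/
instance mgroup (A : AddSubgroup B) (n : ℕ) [NeZero n] [BoundedSub A n] :
    Group (A × B × ZMod n) where
  mul x y := (x.1 + y.1, x.2.1 + x.2.2.val • (y.1 : B) + y.2.1, x.2.2 + y.2.2)
  one := (0, 0, 0)
  inv x := (-x.1, -x.2.1 + x.2.2.val • (x.1 : B), -x.2.2)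
  mul_assoc x y z := by
    have hb := BoundedSub.bound (A := A) (n := n)
    refine Prod.ext (add_assoc _ _ _) (Prod.ext ?_ (add_assoc _ _ _))
    show x.2.1 + x.2.2.val • (y.1 : B) + y.2.1 + (x.2.2 + y.2.2).val • (z.1 : B) + z.2.1
        = x.2.1 + x.2.2.val • ((y.1 + z.1 : A) : B) + (y.2.1 + y.2.2.val • (z.1 : B) + z.2.1)
    rw [ZMod.val_add, val_smul_eq _ (hb z.1), AddSubgroup.coe_add, smul_add, add_nsmul]
    abel
  one_mul x := by
    refine Prod.ext (zero_add _) (Prod.ext ?_ (zero_add _))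
    show (0 : B) + (0 : ZMod n).val • (x.1 : B) + x.2.1 = x.2.1
    simp
  mul_one x := by
    refine Prod.ext (add_zero _) (Prod.ext ?_ (add_zero _))
    show x.2.1 + x.2.2.val • ((0 : A) : B) + 0 = x.2.1
    simp
  inv_mul_cancel x := by
    have hb := BoundedSub.bound (A := A) (n := n)
    refine Prod.ext (neg_add_cancel _) (Prod.ext ?_ (neg_add_cancel _))
    show -x.2.1 + x.2.2.val • (x.1 : B) + (-x.2.2).val • (x.1 : B) + x.2.1 = 0
    have h2 : ((-x.2.2).val + x.2.2.val) % n = 0 := by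
      rw [← ZMod.val_add, neg_add_cancel, ZMod.val_zero]
    have h3 : x.2.2.val • (x.1 : B) + (-x.2.2).val • (x.1 : B) = 0 := by
      rw [add_comm, ← add_nsmul, ← val_smul_eq _ (hb x.1), h2, zero_nsmul]
    rw [add_assoc, add_assoc, ← add_assoc (x.2.2.val • (x.1 : B)), h3, zero_add, neg_add_cancel]

/-- The group `M = G(A ⊆ B)` is metabelian: its commutator subgroup is contained in its
center.  In particular `M` is nilpotent of class at most `2`. -/
theorem construction_is_metabelian (p m : ℕ) [Fact p.Prime] {B : Type*} [AddCommGroup B]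
    [Finite B] (hpB : ∀ b : B, ∃ k : ℕ, p ^ k • b = 0) (A : AddSubgroup B)
    [BoundedSub A (p ^ m)] (hexp : AddMonoid.exponent A = p ^ m) :
    commutator (A × B × ZMod (p ^ m)) ≤ Subgroup.center (A × B × ZMod (p ^ m)) ∧
    Group.IsNilpotent (A × B × ZMod (p ^ m)) ∧
    (⊤ : Subgroup (A × B × ZMod (p ^ m))).lowerCentralSeries 2 = ⊥ := by
  have key : ∀ x : A × B × ZMod (p ^ m), x.1 = 0 → x.2.2 = 0 →
      x ∈ Subgroup.center (A × B × ZMod (p ^ m)) := by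
    intro x h1 h2
    rw [Subgroup.mem_center_iff]
    intro g
    refine Prod.ext ?_ (Prod.ext ?_ ?_)
    · show g.1 + x.1 = x.1 + g.1
      rw [h1]; simp
    · show g.2.1 + g.2.2.val • (x.1 : B) + x.2.1 = x.2.1 + x.2.2.val • (g.1 : B) + g.2.1
      rw [h1, h2]
      simp [add_comm]
    · show g.2.2 + x.2.2 = x.2.2 + g.2.2
      rw [h2]; simp
  have hcomm : commutator (A × B × ZMod (p ^ m)) ≤ Subgroup.center (A × B × ZMod (p ^ m)) := by
    rw [commutator_def, Subgroup.commutator_le]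
    intro g _ h _
    apply key
    · show g.1 + h.1 + -g.1 + -h.1 = 0
      abel
    · show g.2.2 + h.2.2 + -g.2.2 + -h.2.2 = 0
      abel
  have hlcs : (⊤ : Subgroup (A × B × ZMod (p ^ m))).lowerCentralSeries 2 = ⊥ := by
    rw [eq_bot_iff, show (2 : ℕ) = 1 + 1 from rfl, Subgroup.lowerCentralSeries_succ,
      Subgroup.top_lowerCentralSeries_one]
    rw [Subgroup.commutator_def, Subgroup.closure_le]
    rintro z ⟨x, hx, y, -, rfl⟩
    have hc := Subgroup.mem_center_iff.mp (hcomm hx) y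
    have : x * y * x⁻¹ * y⁻¹ = 1 := commutatorElement_eq_one_iff_mul_comm.mpr hc.symm
    simp [commutatorElement_def, this, Subgroup.one_mem]
  exact ⟨hcomm, Subgroup.nilpotent_iff_lowerCentralSeries.mpr ⟨2, hlcs⟩, hlcs⟩
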